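/- The 2×2×2 tensor A = [A₁|A₂] with slices A₁ = [[1,0],[0,−1]] and A₂ = [[0,−1],[−1,0]] satisfies rank_ℝ(A) = 3 when regarded as an element of ℝ^{2×2×2} and rank_ℂ(A) = 2 when regarded as an element of ℂ^{2×2×2}. -/

import Mathlib

open Matrix Finset

/-- The tensor rank of an array `A ∈ 𝔽^{l×m×n}`: the minimal `r` such that `A` is a sum of
`r` elementary (decomposable) tensors `x ⊗ y ⊗ z = (x_i y_j z_k)`. -/
noncomputable def tensorRank {𝔽 : Type*} [Field 𝔽] {l m n : ℕ}
    (A : Fin l → Fin m → Fin n → 𝔽) : ℕ :=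
  sInf {r : ℕ | ∃ (x : Fin r → Fin l → 𝔽) (y : Fin r → Fin m → 𝔽) (z : Fin r → Fin n → 𝔽),
      A = ∑ i : Fin r, fun p q s => x i p * y i q * z i s}

/-- The multilinear matrix multiplication: `(L,M,N)·A` has entries
`b_{pqr} = Σ_{i,j,k} L_{pi} M_{qj} N_{rk} a_{ijk}`. -/
def mulAct {𝔽 : Type*} [Field 𝔽] {l m n : ℕ}
    (L : Matrix (Fin l) (Fin l) 𝔽) (M : Matrix (Fin m) (Fin m) 𝔽) (N : Matrix (Fin n) (Fin n) 𝔽)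
    (A : Fin l → Fin m → Fin n → 𝔽) : Fin l → Fin m → Fin n → 𝔽 :=
  fun p q r => ∑ i, ∑ j, ∑ k, L p i * M q j * N r k * A i j k

/-- The elementary (decomposable) tensor `x ⊗ y ⊗ z = (x_i y_j z_k)`. -/
def elemT {𝔽 : Type*} [Field 𝔽] {l m n : ℕ}
    (x : Fin l → 𝔽) (y : Fin m → 𝔽) (z : Fin n → 𝔽) : Fin l → Fin m → Fin n → 𝔽 :=
  fun i j k => x i * y j * z k

section helpers

private lemma rank_ne_zero {𝔽 : Type*} [Field 𝔽] (x y z : Fin 0 → Fin 2 → 𝔽)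
    (h : (fun i j k : Fin 2 =>
      if k = 0 then (!![1, 0; 0, -1] : Matrix (Fin 2) (Fin 2) 𝔽) i j
      else (!![0, -1; -1, 0] : Matrix (Fin 2) (Fin 2) 𝔽) i j) =
      ∑ i : Fin 0, fun p q s => x i p * y i q * z i s) : False := by
  have := congrFun (congrFun (congrFun h 0) 0) 0
  simp at this

private lemma rank_ne_one {𝔽 : Type*} [Field 𝔽] (x y z : Fin 1 → Fin 2 → 𝔽)
    (h : (fun i j k : Fin 2 =>
      if k = 0 then (!![1, 0; 0, -1] : Matrix (Fin 2) (Fin 2) 𝔽) i j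
      else (!![0, -1; -1, 0] : Matrix (Fin 2) (Fin 2) 𝔽) i j) =
      ∑ i : Fin 1, fun p q s => x i p * y i q * z i s) : False := by
  have E := fun p q s => congrFun (congrFun (congrFun h p) q) s
  simp only [Finset.sum_apply, Fin.sum_univ_one] at E
  have e1 := E 0 0 0
  have e2 := E 0 1 0
  have e3 := E 1 0 0
  have e4 := E 1 1 0
  simp [-mul_eq_zero, -zero_eq_mul] at e1 e2 e3 e4
  have : (-1 : 𝔽) = 0 := by
    linear_combination (x 0 1 * y 0 1 * z 0 0) * e1 - (x 0 1 * y 0 0 * z 0 0) * e2 + e4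
  norm_num at this

private lemma rank_ne_two_real (x y z : Fin 2 → Fin 2 → ℝ)
    (h : (fun i j k : Fin 2 =>
      if k = 0 then (!![1, 0; 0, -1] : Matrix (Fin 2) (Fin 2) ℝ) i j
      else (!![0, -1; -1, 0] : Matrix (Fin 2) (Fin 2) ℝ) i j) =
      ∑ i : Fin 2, fun p q s => x i p * y i q * z i s) : False := by
  have E := fun p q s => congrFun (congrFun (congrFun h p) q) s
  simp only [Finset.sum_apply, Fin.sum_univ_two] at E
  have e000 := E 0 0 0
  have e010 := E 0 1 0
  have e100 := E 1 0 0
  have e110 := E 1 1 0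
  have e001 := E 0 0 1
  have e011 := E 0 1 1
  have e101 := E 1 0 1
  have e111 := E 1 1 1
  simp [-mul_eq_zero, -zero_eq_mul] at e000 e010 e100 e110 e001 e011 e101 e111
  set B : ℝ := x 0 0 * y 0 0 * (x 1 1 * y 1 1) + x 1 0 * y 1 0 * (x 0 1 * y 0 1)
      - x 0 0 * y 0 1 * (x 1 1 * y 1 0) - x 1 0 * y 1 1 * (x 0 1 * y 0 0) with hB
  have h1 : z 0 0 * z 1 0 * B = -1 := by
    rw [hB]
    linear_combination (-(x 0 1 * y 0 1 * z 0 0 + x 1 1 * y 1 1 * z 1 0)) * e000 - e110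
      + (x 0 1 * y 0 0 * z 0 0 + x 1 1 * y 1 0 * z 1 0) * e010
  have h2 : z 0 1 * z 1 1 * B = -1 := by
    rw [hB]
    linear_combination (-(x 0 1 * y 0 1 * z 0 1 + x 1 1 * y 1 1 * z 1 1)) * e001
      + (x 0 1 * y 0 0 * z 0 1 + x 1 1 * y 1 0 * z 1 1) * e011 - e101
  have h3 : z 0 0 * z 1 1 * B + z 1 0 * z 0 1 * B = 0 := by
    rw [hB]
    linear_combination (-(x 0 1 * y 0 1 * z 0 1 + x 1 1 * y 1 1 * z 1 1)) * e000
      + (-(x 0 1 * y 0 1 * z 0 0 + x 1 1 * y 1 1 * z 1 0)) * e001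
      + (x 0 1 * y 0 0 * z 0 1 + x 1 1 * y 1 0 * z 1 1) * e010
      + (x 0 0 * y 0 1 * z 0 1 + x 1 0 * y 1 1 * z 1 1) * e100 - e111
  have h4 : (z 0 0 * z 1 1 * B) * (z 1 0 * z 0 1 * B) = 1 := by
    linear_combination (z 0 1 * z 1 1 * B) * h1 - h2
  have h5 : z 1 0 * z 0 1 * B = -(z 0 0 * z 1 1 * B) := by linarith
  rw [h5] at h4
  nlinarith [sq_nonneg (z 0 0 * z 1 1 * B)]

private lemma mem_three_real : 3 ∈ {r : ℕ | ∃ (x : Fin r → Fin 2 → ℝ) (y : Fin r → Fin 2 → ℝ)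
    (z : Fin r → Fin 2 → ℝ),
    (fun i j k : Fin 2 =>
      if k = 0 then (!![1, 0; 0, -1] : Matrix (Fin 2) (Fin 2) ℝ) i j
      else (!![0, -1; -1, 0] : Matrix (Fin 2) (Fin 2) ℝ) i j) =
      ∑ i : Fin r, fun p q s => x i p * y i q * z i s} := by
  refine ⟨![![1,0],![0,1],![1,1]], ![![1,0],![0,1],![1,1]], ![![1,1],![-1,1],![0,-1]], ?_⟩
  funext p q s
  simp only [Finset.sum_apply, Fin.sum_univ_three]
  fin_cases p <;> fin_cases q <;> fin_cases s <;>
    simp only [Matrix.cons_val_two, Matrix.tail_cons] <;> norm_num [Matrix.vecHead, Matrix.vecTail]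

private lemma mem_two_complex : 2 ∈ {r : ℕ | ∃ (x : Fin r → Fin 2 → ℂ) (y : Fin r → Fin 2 → ℂ)
    (z : Fin r → Fin 2 → ℂ),
    (fun i j k : Fin 2 =>
      if k = 0 then (!![1, 0; 0, -1] : Matrix (Fin 2) (Fin 2) ℂ) i j
      else (!![0, -1; -1, 0] : Matrix (Fin 2) (Fin 2) ℂ) i j) =
      ∑ i : Fin r, fun p q s => x i p * y i q * z i s} := by
  refine ⟨![![1,-Complex.I],![1,Complex.I]], ![![1,-Complex.I],![1,Complex.I]],
    ![![1/2,-Complex.I/2],![1/2,Complex.I/2]], ?_⟩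
  funext p q s
  simp only [Finset.sum_apply, Fin.sum_univ_two]
  fin_cases p <;> fin_cases q <;> fin_cases s <;>
    simp [Matrix.vecHead, Matrix.vecTail] <;> ring_nf <;> simp [Complex.I_sq] <;> ring_nf

end helpers

/-- The `2×2×2` tensor `A = [A₁|A₂]` with slices `A₁ = [[1,0],[0,−1]]` and
`A₂ = [[0,−1],[−1,0]]` has tensor rank `3` over `ℝ` and tensor rank `2` over `ℂ`. -/
theorem tensorRank_depends_on_field :
    tensorRank (fun i j k : Fin 2 =>
      if k = 0 then (!![1, 0; 0, -1] : Matrix (Fin 2) (Fin 2) ℝ) i j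
      else (!![0, -1; -1, 0] : Matrix (Fin 2) (Fin 2) ℝ) i j) = 3 ∧
    tensorRank (fun i j k : Fin 2 =>
      if k = 0 then (!![1, 0; 0, -1] : Matrix (Fin 2) (Fin 2) ℂ) i j
      else (!![0, -1; -1, 0] : Matrix (Fin 2) (Fin 2) ℂ) i j) = 2 := by
  
  constructor
  · refine le_antisymm (Nat.sInf_le mem_three_real) (le_csInf ⟨3, mem_three_real⟩ ?_)
    rintro r ⟨x, y, z, hd⟩
    by_contra hlt
    push_neg at hlt
    interval_cases r
    · exact rank_ne_zero x y z hd
    · exact rank_ne_one x y z hd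
    · exact rank_ne_two_real x y z hd
  · refine le_antisymm (Nat.sInf_le mem_two_complex) (le_csInf ⟨2, mem_two_complex⟩ ?_)
    rintro r ⟨x, y, z, hd⟩
    by_contra hlt
    push_neg at hlt
    interval_cases r
    · exact rank_ne_zero x y z hd
    · exact rank_ne_one x y z hd
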